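/- arXiv:1609.07288 — 3 statements merged into one kernel-verified Lean document; each statement's English description precedes it below -/
import Mathlib

section
/- Fix an integer $k \geq 1$. The function $f(x) = x e^{-1/(2x)} - 1 + (1 - e^{-1/x})^{k-1}$ is strictly increasing on $[1, \infty)$. -/
lemma aux_pow_bound : ∀ n : ℕ, (n : ℝ) * (2/3) ^ (n - 1) ≤ 4/3 := by
  have key : ∀ n : ℕ, 2 ≤ n → (n : ℝ) * (2/3) ^ (n - 1) ≤ 4/3 := by
    intro n hn
    induction n, hn using Nat.le_induction with
    | base => norm_num
    | succ n hn ih =>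
      have hn' : n - 1 + 1 = n := by omega
      have h1 : ((n : ℝ) + 1) * (2/3 : ℝ) ^ n
          = (2/3 * ((n : ℝ) + 1)) * (2/3) ^ (n - 1) := by
        calc ((n : ℝ) + 1) * (2/3 : ℝ) ^ n
            = ((n : ℝ) + 1) * (2/3 : ℝ) ^ (n - 1 + 1) := by rw [hn']
          _ = (2/3 * ((n : ℝ) + 1)) * (2/3) ^ (n - 1) := by rw [pow_succ]; ring
      have h2 : (2/3 : ℝ) * ((n : ℝ) + 1) ≤ (n : ℝ) := by
        have : (2 : ℝ) ≤ (n : ℝ) := by exact_mod_cast hn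
        linarith
      have h3 : (0 : ℝ) ≤ (2/3 : ℝ) ^ (n - 1) := by positivity
      push_cast
      rw [h1]
      calc (2/3 * ((n : ℝ) + 1)) * (2/3) ^ (n - 1)
          ≤ (n : ℝ) * (2/3) ^ (n - 1) := by
            exact mul_le_mul_of_nonneg_right h2 h3
        _ ≤ 4/3 := ih
  intro n
  match n with
  | 0 => norm_num
  | 1 => norm_num
  | (m + 2) => exact key (m + 2) (by omega)

lemma aux_n_bound (n : ℕ) (A : ℝ) (hA0 : 0 ≤ A) (hA : A ≤ 2/3) :
    (n : ℝ) * A ^ (n - 1) ≤ 4/3 := by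
  calc (n : ℝ) * A ^ (n - 1) ≤ (n : ℝ) * (2/3) ^ (n - 1) := by
        apply mul_le_mul_of_nonneg_left _ (Nat.cast_nonneg n)
        exact pow_le_pow_left₀ hA0 hA _
    _ ≤ 4/3 := aux_pow_bound n

lemma aux_hasDerivAt (n : ℕ) (x : ℝ) (hx : 0 < x) :
    HasDerivAt
      (fun x : ℝ => x * Real.exp (-1 / (2 * x)) - 1 + (1 - Real.exp (-1 / x)) ^ n)
      (Real.exp (-1 / (2 * x)) * (1 + 1 / (2 * x))
        - (n : ℝ) * (1 - Real.exp (-1 / x)) ^ (n - 1) * (Real.exp (-1 / x) / x ^ 2)) x := by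
  have hx' : x ≠ 0 := hx.ne'
  have h1 : HasDerivAt (fun x : ℝ => -1 / (2 * x)) (1 / (2 * x ^ 2)) x := by
    have h0 : HasDerivAt (fun y : ℝ => -1/2 * y⁻¹) (-1/2 * -(x^2)⁻¹) x :=
      (hasDerivAt_inv hx').const_mul (-1/2 : ℝ)
    have e1 : (fun y : ℝ => (-1/2 : ℝ) * y⁻¹) = fun y : ℝ => -1 / (2 * y) := by
      funext y; by_cases hy : y = 0
      · simp [hy]
      · field_simp
    have e2 : ((-1/2 : ℝ) * -(x^2)⁻¹) = 1 / (2 * x ^ 2) := by field_simp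
    rwa [e1, e2] at h0
  have h2 : HasDerivAt (fun x : ℝ => Real.exp (-1 / (2 * x)))
      (Real.exp (-1 / (2 * x)) * (1 / (2 * x ^ 2))) x := h1.exp
  have h3 : HasDerivAt (fun x : ℝ => x * Real.exp (-1 / (2 * x)))
      (1 * Real.exp (-1 / (2 * x)) + x * (Real.exp (-1 / (2 * x)) * (1 / (2 * x ^ 2)))) x :=
    (hasDerivAt_id x).mul h2
  have h4 : HasDerivAt (fun x : ℝ => -1 / x) (1 / x ^ 2) x := by
    have h0 : HasDerivAt (fun y : ℝ => (-1 : ℝ) * y⁻¹) ((-1 : ℝ) * -(x^2)⁻¹) x :=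
      (hasDerivAt_inv hx').const_mul (-1 : ℝ)
    have e1 : (fun y : ℝ => (-1 : ℝ) * y⁻¹) = fun y : ℝ => -1 / y := by
      funext y; rw [neg_div, ← one_div, neg_one_mul, div_eq_mul_inv, one_mul]
    have e2 : ((-1 : ℝ) * -(x^2)⁻¹) = 1 / x ^ 2 := by field_simp
    rwa [e1, e2] at h0
  have h5 : HasDerivAt (fun x : ℝ => Real.exp (-1 / x))
      (Real.exp (-1 / x) * (1 / x ^ 2)) x := h4.exp
  have h6 : HasDerivAt (fun x : ℝ => 1 - Real.exp (-1 / x))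
      (-(Real.exp (-1 / x) * (1 / x ^ 2))) x := h5.const_sub 1
  have h7 : HasDerivAt (fun x : ℝ => (1 - Real.exp (-1 / x)) ^ n)
      ((n : ℝ) * (1 - Real.exp (-1 / x)) ^ (n - 1) * (-(Real.exp (-1 / x) * (1 / x ^ 2)))) x :=
    h6.pow n
  have := (h3.sub_const 1).add h7
  refine this.congr_deriv ?_
  field_simp
  ring

theorem stmt_7 (k : ℕ) (hk : 1 ≤ k) :
    StrictMonoOn
      (fun x : ℝ => x * Real.exp (-1 / (2 * x)) - 1 + (1 - Real.exp (-1 / x)) ^ (k - 1))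
      (Set.Ici 1) := by
  set n := k - 1 with hn
  apply StrictMonoOn.mono (s := Set.Ici (1 : ℝ)) _ (le_refl _)
  apply strictMonoOn_of_deriv_pos (convex_Ici 1)
  · intro x hx
    have hx0 : (0 : ℝ) < x := lt_of_lt_of_le one_pos hx
    exact (aux_hasDerivAt n x hx0).continuousAt.continuousWithinAt
  · intro x hx
    rw [interior_Ici] at hx
    have hx1 : (1 : ℝ) < x := hx
    have hx0 : (0 : ℝ) < x := lt_trans one_pos hx1
    rw [(aux_hasDerivAt n x hx0).deriv]
    set E1 := Real.exp (-1 / x) with hE1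
    set E2 := Real.exp (-1 / (2 * x)) with hE2
    have hE1pos : 0 < E1 := Real.exp_pos _
    have hE2pos : 0 < E2 := Real.exp_pos _
    have hE12 : E1 ≤ E2 := by
      apply Real.exp_le_exp.2
      rw [div_le_div_iff₀ (by linarith) (by linarith)]
      nlinarith
    have hE1le1 : E1 ≤ 1 := by
      apply Real.exp_le_one_iff.2
      rw [neg_div]
      have : (0:ℝ) < 1 / x := by positivity
      linarith
    have hE1ge : (1:ℝ)/3 ≤ E1 := by
      have h1 : Real.exp (-1 : ℝ) ≤ E1 := by
        apply Real.exp_le_exp.2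
        rw [neg_div]
        have : 1 / x ≤ 1 := by
          rw [div_le_one hx0]; linarith
        linarith
      have h2 : (1:ℝ)/3 ≤ Real.exp (-1 : ℝ) := by
        rw [Real.exp_neg]
        have he : Real.exp 1 ≤ 3 := by
          have := Real.exp_one_lt_d9
          linarith
        have hpos := Real.exp_pos 1
        have hi : 0 < (Real.exp 1)⁻¹ := by positivity
        have hmul : (Real.exp 1)⁻¹ * Real.exp 1 = 1 := inv_mul_cancel₀ hpos.ne'
        nlinarith
      linarith
    set A := 1 - E1 with hA
    have hA0 : 0 ≤ A := by simp [hA]; linarith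
    have hA23 : A ≤ 2/3 := by simp [hA]; linarith
    have hbound : (n : ℝ) * A ^ (n - 1) ≤ 4/3 := aux_n_bound n A hA0 hA23
    have hpowpos : 0 ≤ A ^ (n - 1) := by positivity
    have hnn : 0 ≤ (n : ℝ) * A ^ (n - 1) := by positivity
    -- key: n A^(n-1) * (E1/x²) ≤ (4/3) * E2/x² < E2 * (1 + 1/(2x))
    have hx2 : (0:ℝ) < x ^ 2 := by positivity
    have step1 : (n : ℝ) * A ^ (n - 1) * (E1 / x ^ 2) ≤ (4/3) * (E2 / x ^ 2) := by
      have h1 : E1 / x ^ 2 ≤ E2 / x ^ 2 := by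
        apply div_le_div_of_nonneg_right hE12 hx2.le
      exact mul_le_mul hbound h1 (by positivity) (by norm_num)
    have step2 : (4/3) * (E2 / x ^ 2) < E2 * (1 + 1 / (2 * x)) := by
      have hq : (4:ℝ)/3 < x ^ 2 + x / 2 := by nlinarith
      have heq : E2 * (1 + 1 / (2 * x)) = (E2 * (x ^ 2 + x / 2)) / x ^ 2 := by
        field_simp
      rw [heq, mul_div_assoc', div_lt_div_iff₀ hx2 hx2]
      nlinarith [mul_lt_mul_of_pos_right hq (mul_pos hE2pos hx2)]
    linarith
end

section
/- For each integer $1 \leq k \leq 3$ and every real $x \geq 1$, we have $x e^{-1/(2x)} > 1 - (1 - e^{-1/x})^{k-1}$. -/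
theorem stmt_9 (k : ℕ) (hk1 : 1 ≤ k) (hk3 : k ≤ 3) (x : ℝ) (hx : 1 ≤ x) :
    x * Real.exp (-1 / (2 * x)) > 1 - (1 - Real.exp (-1 / x)) ^ (k - 1) := by
  have hx0 : (0:ℝ) < x := by linarith
  set t := Real.exp (-1 / (2 * x)) with ht
  have ht0 : 0 < t := Real.exp_pos _
  have ht1 : t < 1 := by
    rw [ht]
    apply Real.exp_lt_one_iff.mpr
    rw [div_neg_iff]
    right; constructor <;> linarith
  have hexy : Real.exp (-1 / x) = t ^ 2 := by
    rw [ht, ← Real.exp_nat_mul]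
    congr 1
    field_simp
    norm_num
  interval_cases k
  · norm_num
    positivity
  · norm_num [hexy]
    nlinarith
  · -- k = 3 : need x * t > 1 - (1 - t^2)^2 = 2 t^2 - t^4
    rw [hexy]
    norm_num
    have hu : (0:ℝ) ≤ 1 / (2 * x) := by positivity
    have hsum := Real.sum_le_exp_of_nonneg hu 4
    have hS : (1:ℝ) + 1/(2*x) + (1/(2*x))^2/2 + (1/(2*x))^3/6 ≤ Real.exp (1/(2*x)) := by
      refine le_trans (le_of_eq ?_) hsum
      rw [Finset.sum_range_succ, Finset.sum_range_succ, Finset.sum_range_succ,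
        Finset.sum_range_succ, Finset.sum_range_zero]
      norm_num [Nat.factorial]
    have hti : t * Real.exp (1/(2*x)) = 1 := by
      rw [ht, ← Real.exp_add, show -1/(2*x) + 1/(2*x) = 0 by ring, Real.exp_zero]
    have hb : t * (48*x^3+24*x^2+6*x+1) ≤ 48*x^3 := by
      have h1 : t * ((1:ℝ) + 1/(2*x) + (1/(2*x))^2/2 + (1/(2*x))^3/6) ≤ 1 := by
        calc t * ((1:ℝ) + 1/(2*x) + (1/(2*x))^2/2 + (1/(2*x))^3/6)
            ≤ t * Real.exp (1/(2*x)) := mul_le_mul_of_nonneg_left hS ht0.le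
          _ = 1 := hti
      have hx3 : (0:ℝ) < 48 * x^3 := by positivity
      calc t * (48*x^3+24*x^2+6*x+1)
          = 48*x^3 * (t * ((1:ℝ) + 1/(2*x) + (1/(2*x))^2/2 + (1/(2*x))^3/6)) := by
            field_simp; ring
        _ ≤ 48*x^3 * 1 := mul_le_mul_of_nonneg_left h1 hx3.le
        _ = 48*x^3 := by ring
    have key : x + t^3 > 2*t := by
      rcases le_or_gt x (11/10) with h | h
      · nlinarith [sq_nonneg (t - 3/5), sq_nonneg (x-1), mul_pos ht0 ht0, sq_nonneg (t*x-3/5), mul_nonneg (sq_nonneg (t-3/5)) ht0.le, mul_nonneg (sq_nonneg (t-3/5)) (sub_nonneg.2 hx)]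
      · nlinarith [sq_nonneg (t - 4/5), mul_nonneg (sq_nonneg (t-4/5)) ht0.le, sq_nonneg (t+1)]
    nlinarith [mul_pos ht0 ht0, key, mul_pos ht0 (mul_pos ht0 ht0), sq_nonneg (t^2-1)]
end

section
/- In any instance with strict (possibly incomplete) preference lists augmented with last resort items, a popular matching exists if and only if an A-perfect matching exists, where a matching $M$ is A-perfect if every person $a$ is matched with either $f(a)$ (their top-choice item) or $s(a)$ (their highest-ranked item not in $F$, the set of items that are someone's top choice). -/
/-! Popular matchings with strict, possibly incomplete preference lists,
augmented with last resort items.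

People are elements of a finite type `A`, items of a finite type `B`.
Each person `a` has a strict preference list `pref a : List B` (no ties,
`Nodup`), ranking some of the items. The last resort item `ℓ_a` of `a` is
modelled by `none : Option B` (it is unique to `a`, ranked below all listed
items). A matching assigns to every person an item of their list or their
last resort item, with distinct people getting distinct real items. -/

namespace Stmt18

variable {A B : Type*} [Fintype A] [Fintype B] [DecidableEq A] [DecidableEq B]

/-- The rank of an (optional) item in `a`'s preference list; the last
resort item `none` is ranked below all listed items. -/
def rank (pref : A → List B) (a : A) : Option B → ℕ
  | none => (pref a).length
  | some b => (pref a).idxOf b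

/-- `M` is a matching: each person gets an item on their list or their own
last resort item, and no real item is assigned to two people. -/
def IsMatching (pref : A → List B) (M : A → Option B) : Prop :=
  (∀ a b, M a = some b → b ∈ pref a) ∧
    ∀ a a', M a ≠ none → M a = M a' → a = a'

/-- `M` is popular: for every matching `M'`, the number of people preferring
`M'` is at most the number of people preferring `M`. -/
def IsPopular (pref : A → List B) (M : A → Option B) : Prop :=
  ∀ M', IsMatching pref M' →
    {a | rank pref a (M' a) < rank pref a (M a)}.ncard ≤
      {a | rank pref a (M a) < rank pref a (M' a)}.ncard

/-- `f a`: the top-choice item of `a` (the last resort item if `a`'s list is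
empty). -/
def f (pref : A → List B) (a : A) : Option B :=
  (pref a).head?

/-- `F`: the set of items that are somebody's top choice. -/
def F (pref : A → List B) : Finset B :=
  Finset.univ.filter (fun b => ∃ a, f pref a = some b)

/-- `s a`: the most preferred item of `a` that is not in `F` (the last resort
item of `a` if every item on `a`'s list is in `F`). -/
def s (pref : A → List B) (a : A) : Option B :=
  (pref a).find? (fun b => b ∉ F pref)

/-- `M` is `A`-perfect if every person is matched with `f a` or `s a`. -/
def IsAPerfect (pref : A → List B) (M : A → Option B) : Prop :=
  ∀ a, M a = f pref a ∨ M a = s pref a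

/-! ### Basic facts -/

variable {pref : A → List B}

lemma rank_none (a : A) : rank pref a none = (pref a).length := rfl

lemma rank_some (a : A) (b : B) : rank pref a (some b) = (pref a).idxOf b := rfl

lemma rank_le (a : A) (o : Option B) (ho : ∀ b, o = some b → b ∈ pref a) :
    rank pref a o ≤ (pref a).length := by
  cases o with
  | none => exact le_rfl
  | some b => exact le_of_lt (List.idxOf_lt_length_iff.mpr (ho b rfl))

lemma rank_lt_length (a : A) (b : B) (hb : b ∈ pref a) :
    rank pref a (some b) < (pref a).length :=
  List.idxOf_lt_length_iff.mpr hb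

lemma rank_inj (hstrict : ∀ a, (pref a).Nodup) (a : A) (o o' : Option B)
    (ho : ∀ b, o = some b → b ∈ pref a) (ho' : ∀ b, o' = some b → b ∈ pref a)
    (h : rank pref a o = rank pref a o') : o = o' := by
  cases o with
  | none =>
    cases o' with
    | none => rfl
    | some b => exact absurd h.symm (Nat.ne_of_lt (rank_lt_length a b (ho' b rfl)))
  | some b =>
    cases o' with
    | none => exact absurd h (Nat.ne_of_lt (rank_lt_length a b (ho b rfl)))
    | some b' =>
      exact congrArg some ((List.idxOf_inj (ho b rfl)).mp h)

lemma f_eq_some {a : A} {b : B} (h : f pref a = some b) : ∃ t, pref a = b :: t := by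
  unfold f at h
  cases hl : pref a with
  | nil => rw [hl] at h; simp at h
  | cons x t => rw [hl] at h; simp at h; exact ⟨t, by rw [h]⟩

lemma mem_of_f {a : A} {b : B} (h : f pref a = some b) : b ∈ pref a := by
  obtain ⟨t, ht⟩ := f_eq_some h; rw [ht]; exact List.mem_cons_self

lemma rank_f_eq_zero {a : A} {b : B} (h : f pref a = some b) :
    rank pref a (some b) = 0 := by
  obtain ⟨t, ht⟩ := f_eq_some h
  rw [rank_some, ht, List.idxOf_cons_self]

lemma rank_eq_zero {a : A} {o : Option B} (ho : ∀ b, o = some b → b ∈ pref a)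
    (h : rank pref a o = 0) : o = f pref a := by
  cases o with
  | none =>
    rw [rank_none] at h
    unfold f
    rw [List.length_eq_zero_iff.mp h]
    rfl
  | some b =>
    have hb := ho b rfl
    rw [rank_some] at h
    unfold f
    cases hl : pref a with
    | nil => rw [hl] at hb; simp at hb
    | cons x t =>
      rw [hl] at h
      rw [hl] at hb
      simp only [List.head?_cons]
      rcases List.mem_cons.mp hb with h' | h'
      · rw [h']
      · -- indexOf b (x :: t) = 0 means b = x
        by_cases hbx : b = x
        · rw [hbx]
        · rw [List.idxOf_cons_ne _ (by exact fun h => hbx h.symm)] at h; simp at h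

lemma f_mem_F {a : A} {b : B} (h : f pref a = some b) : b ∈ F pref := by
  unfold F; simp only [Finset.mem_filter, Finset.mem_univ, true_and]; exact ⟨a, h⟩

/-- `find?` returns the *first* element satisfying the predicate. -/
lemma find?_min {l : List B} {p : B → Bool} {b : B} (hb : b ∈ l) (hpb : p b = true) :
    ∃ c, l.find? p = some c ∧ l.idxOf c ≤ l.idxOf b := by
  induction l with
  | nil => simp at hb
  | cons x t ih =>
    by_cases hpx : p x = true
    · exact ⟨x, by rw [List.find?_cons_of_pos hpx], by simp⟩
    · have hbx : b ≠ x := fun h => hpx (h ▸ hpb)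
      have hbt : b ∈ t := by rcases List.mem_cons.mp hb with h | h; exact absurd h hbx; exact h
      obtain ⟨c, hc, hle⟩ := ih hbt
      refine ⟨c, by rw [List.find?_cons_of_neg (by simpa using hpx)]; exact hc, ?_⟩
      have hcx : c ≠ x := fun h => hpx (h ▸ List.find?_some hc)
      rw [List.idxOf_cons_ne _ (fun h => hcx h.symm), List.idxOf_cons_ne _ (fun h => hbx h.symm)]
      exact Nat.succ_le_succ hle

lemma s_mem {a : A} {c : B} (h : s pref a = some c) : c ∈ pref a :=
  List.mem_of_find?_eq_some h

lemma s_not_mem_F {a : A} {c : B} (h : s pref a = some c) : c ∉ F pref := by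
  have := List.find?_some h
  simpa using this

/-- Anything strictly better than `s a` (on `a`'s list) is in `F`. -/
lemma mem_F_of_rank_lt_s {a : A} {b : B} (hb : b ∈ pref a)
    (h : rank pref a (some b) < rank pref a (s pref a)) : b ∈ F pref := by
  by_contra hbF
  obtain ⟨c, hc, hle⟩ := find?_min (l := pref a) (p := fun b => decide (b ∉ F pref)) hb (by simpa using hbF)
  have : s pref a = some c := hc
  rw [this, rank_some, rank_some] at h
  omega

lemma s_valid (a : A) : ∀ b, s pref a = some b → b ∈ pref a := fun _ h => s_mem h

lemma M_valid {M : A → Option B} (hM : IsMatching pref M) (a : A) :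
    ∀ b, M a = some b → b ∈ pref a := fun b h => hM.1 a b h

/-! ### Sufficiency -/

lemma popular_of_conditions (hstrict : ∀ a, (pref a).Nodup) {M : A → Option B}
    (hM : IsMatching pref M) (hAP : IsAPerfect pref M)
    (hF : ∀ b ∈ F pref, ∃ a, M a = some b ∧ f pref a = some b) :
    IsPopular pref M := by
  intro M' hM'
  set S := {a | rank pref a (M' a) < rank pref a (M a)} with hS
  set T := {a | rank pref a (M a) < rank pref a (M' a)} with hT
  -- every a ∈ S gets in M' an item b ∈ F; its M-owner (with f = b) lands in T
  have key : ∀ a ∈ S, ∃ a', M a' = M' a ∧ f pref a' = M' a := by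
    intro a ha
    have haS : rank pref a (M' a) < rank pref a (M a) := ha
    -- M a = s a
    have hMs : M a = s pref a := by
      rcases hAP a with h | h
      · exfalso
        cases hfa : f pref a with
        | none =>
          have hnil : pref a = [] := by
            have hfa' := hfa
            unfold f at hfa'
            cases hl : pref a with
            | nil => rfl
            | cons x t => rw [hl] at hfa'; simp at hfa'
          rw [h, hfa, rank_none, hnil] at haS
          simp at haS
        | some b =>
          rw [h, hfa] at haS
          rw [rank_f_eq_zero hfa] at haS
          omega
      · exact h
    -- M' a = some b with b ∈ pref a
    cases hM'a : M' a with
    | none =>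
      exfalso
      rw [hM'a, rank_none] at haS
      have := rank_le a (M a) (M_valid hM a)
      omega
    | some b =>
      have hb : b ∈ pref a := hM'.1 a b hM'a
      have hbF : b ∈ F pref := by
        apply mem_F_of_rank_lt_s hb
        rw [← hMs, ← hM'a]
        exact haS
      obtain ⟨a', ha'1, ha'2⟩ := hF b hbF
      exact ⟨a', ha'1, ha'2⟩
  classical
  set g : A → A := fun a => if h : a ∈ S then Classical.choose (key a h) else a with hg
  have hgspec : ∀ a (h : a ∈ S), M (g a) = M' a ∧ f pref (g a) = M' a := by
    intro a h
    simp only [hg, dif_pos h]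
    exact Classical.choose_spec (key a h)
  -- g maps S into T
  have hmaps : ∀ a ∈ S, g a ∈ T := by
    intro a ha
    obtain ⟨h1, h2⟩ := hgspec a ha
    have haS : rank pref a (M' a) < rank pref a (M a) := ha
    cases hM'a : M' a with
    | none => exfalso; rw [hM'a, rank_none] at haS; have := rank_le a (M a) (M_valid hM a); omega
    | some b =>
      rw [hM'a] at h1 h2
      -- g a ≠ a
      have hga : g a ≠ a := by
        intro he
        rw [he] at h1
        rw [h1, hM'a] at haS
        omega
      -- M' (g a) ≠ some b
      have hM'ga : M' (g a) ≠ some b := by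
        intro he
        exact hga (hM'.2 (g a) a (by rw [he]; simp) (by rw [he, hM'a]))
      have hrankM : rank pref (g a) (M (g a)) = 0 := by rw [h1]; exact rank_f_eq_zero h2
      have hpos : 0 < rank pref (g a) (M' (g a)) := by
        rcases Nat.eq_zero_or_pos (rank pref (g a) (M' (g a))) with h | h
        case inr => exact h
        · exfalso
          have := rank_eq_zero (M_valid hM' (g a)) h
          rw [h2] at this
          exact hM'ga this
      show rank pref (g a) (M (g a)) < rank pref (g a) (M' (g a))
      omega
  -- g injective on S
  have hinj : Set.InjOn g S := by
    intro a1 h1 a2 h2 he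
    have e1 := (hgspec a1 h1).1
    have e2 := (hgspec a2 h2).1
    rw [he] at e1
    have : M' a1 = M' a2 := by rw [← e1, ← e2]
    -- M' a1 ≠ none
    have hne : M' a1 ≠ none := by
      intro hn
      have haS : rank pref a1 (M' a1) < rank pref a1 (M a1) := h1
      rw [hn, rank_none] at haS
      have := rank_le a1 (M a1) (M_valid hM a1)
      omega
    exact hM'.2 a1 a2 hne this
  exact Set.ncard_le_ncard_of_injOn g hmaps hinj (Set.toFinite T)

/-! ### From A-perfect to popular -/

def count (pref : A → List B) (M : A → Option B) : ℕ :=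
  (Finset.univ.filter (fun a => M a ≠ f pref a)).card

lemma improve_step (hstrict : ∀ a, (pref a).Nodup) {M : A → Option B}
    (hM : IsMatching pref M) (hAP : IsAPerfect pref M)
    (hnF : ¬ ∀ b ∈ F pref, ∃ a, M a = some b ∧ f pref a = some b) :
    ∃ M₁, IsMatching pref M₁ ∧ IsAPerfect pref M₁ ∧ count pref M₁ < count pref M := by
  push_neg at hnF
  obtain ⟨b, hbF, hnb⟩ := hnF
  have hF' : ∃ a, f pref a = some b := by
    have := hbF; unfold F at this; simpa using this
  obtain ⟨a1, ha1⟩ := hF'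
  -- b is totally unmatched in M
  have hunm : ∀ a', M a' ≠ some b := by
    intro a' hb'
    rcases hAP a' with h | h
    · exact hnb a' hb' (by rw [← h, hb'])
    · rw [hb'] at h
      exact s_not_mem_F h.symm hbF
  set M₁ := Function.update M a1 (some b) with hM₁
  have hupd : ∀ x, x ≠ a1 → M₁ x = M x := fun x hx => Function.update_of_ne hx _ _
  have hupd1 : M₁ a1 = some b := Function.update_self _ _ _
  refine ⟨M₁, ⟨?_, ?_⟩, ?_, ?_⟩
  · intro a c hc
    by_cases h : a = a1
    · subst h; rw [hupd1] at hc; cases hc; exact mem_of_f ha1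
    · rw [hupd a h] at hc; exact hM.1 a c hc
  · intro x y hne heq
    by_cases hx : x = a1
    · by_cases hy : y = a1
      · rw [hx, hy]
      · rw [hx, hupd1] at heq
        rw [hupd y hy] at heq
        exact absurd heq.symm (hunm y)
    · by_cases hy : y = a1
      · rw [hupd x hx] at heq
        rw [hy, hupd1] at heq
        exact absurd heq (hunm x)
      · rw [hupd x hx, hupd y hy] at heq
        exact hM.2 x y (by rw [← hupd x hx]; exact hne) heq
  · intro a
    by_cases h : a = a1
    · subst h; left; rw [hupd1, ha1]
    · rw [hupd a h]; exact hAP a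
  · unfold count
    have ha1mem : a1 ∈ Finset.univ.filter (fun a => M a ≠ f pref a) := by
      simp only [Finset.mem_filter, Finset.mem_univ, true_and]
      rw [ha1]
      exact hunm a1
    have hsub : Finset.univ.filter (fun a => M₁ a ≠ f pref a) ⊆
        (Finset.univ.filter (fun a => M a ≠ f pref a)).erase a1 := by
      intro x hx
      simp only [Finset.mem_filter, Finset.mem_univ, true_and] at hx
      rw [Finset.mem_erase]
      constructor
      · intro he
        subst he
        rw [hupd1, ha1] at hx
        exact hx rfl
      · simp only [Finset.mem_filter, Finset.mem_univ, true_and]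
        by_cases h : x = a1
        · subst h; rw [ha1]; exact hunm x
        · rw [← hupd x h]; exact hx
    calc (Finset.univ.filter (fun a => M₁ a ≠ f pref a)).card
        ≤ ((Finset.univ.filter (fun a => M a ≠ f pref a)).erase a1).card := Finset.card_le_card hsub
      _ < (Finset.univ.filter (fun a => M a ≠ f pref a)).card :=
          Finset.card_erase_lt_of_mem ha1mem

lemma popular_of_APerfect (hstrict : ∀ a, (pref a).Nodup) {M : A → Option B}
    (hM : IsMatching pref M) (hAP : IsAPerfect pref M) :
    ∃ M', IsMatching pref M' ∧ IsPopular pref M' := by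
  classical
  suffices h : ∀ n (M : A → Option B), IsMatching pref M → IsAPerfect pref M →
      count pref M ≤ n → ∃ M', IsMatching pref M' ∧ IsPopular pref M' by
    exact h (count pref M) M hM hAP le_rfl
  intro n
  induction n with
  | zero =>
    intro M hM hAP hc
    refine ⟨M, hM, popular_of_conditions hstrict hM hAP ?_⟩
    intro b hbF
    have hz : ∀ a, M a = f pref a := by
      intro a
      by_contra h
      have : a ∈ Finset.univ.filter (fun a => M a ≠ f pref a) := by simpa using h
      have := Finset.card_pos.mpr ⟨a, this⟩
      unfold count at hc
      omega
    have : ∃ a, f pref a = some b := by unfold F at hbF; simpa using hbF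
    obtain ⟨a, ha⟩ := this
    exact ⟨a, by rw [hz a, ha], ha⟩
  | succ n ih =>
    intro M hM hAP hc
    by_cases hF : ∀ b ∈ F pref, ∃ a, M a = some b ∧ f pref a = some b
    · exact ⟨M, hM, popular_of_conditions hstrict hM hAP hF⟩
    · obtain ⟨M₁, h1, h2, h3⟩ := improve_step hstrict hM hAP hF
      exact ih M₁ h1 h2 (by omega)

/-! ### Necessity -/

-- key counting fact: if M' is a matching with at least two improvers and at most
-- (those improvers excluded) worseners contained in a single point, contradiction
lemma pop_contra {M M' : A → Option B} (hpop : IsPopular pref M) (hM' : IsMatching pref M')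
    (a1 a2 : A) (h12 : a1 ≠ a2)
    (hi1 : rank pref a1 (M' a1) < rank pref a1 (M a1))
    (hi2 : rank pref a2 (M' a2) < rank pref a2 (M a2))
    (hw : ∃ a3, ∀ x, rank pref x (M x) < rank pref x (M' x) → x = a3) : False := by
  obtain ⟨a3, ha3⟩ := hw
  have h1 : ({a1, a2} : Set A) ⊆ {a | rank pref a (M' a) < rank pref a (M a)} := by
    intro x hx
    rcases hx with h | h
    · subst h; exact hi1
    · rw [Set.mem_singleton_iff] at h; subst h; exact hi2
  have h2 : {a | rank pref a (M a) < rank pref a (M' a)} ⊆ ({a3} : Set A) := fun x hx => ha3 x hx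
  have c1 : 2 ≤ {a | rank pref a (M' a) < rank pref a (M a)}.ncard := by
    calc 2 = ({a1, a2} : Set A).ncard := (Set.ncard_pair h12).symm
      _ ≤ _ := Set.ncard_le_ncard h1 (Set.toFinite _)
  have c2 : {a | rank pref a (M a) < rank pref a (M' a)}.ncard ≤ 1 := by
    calc {a | rank pref a (M a) < rank pref a (M' a)}.ncard
        ≤ ({a3} : Set A).ncard := Set.ncard_le_ncard h2 (Set.toFinite _)
      _ = 1 := Set.ncard_singleton a3
  have := hpop M' hM'
  omega

-- Lemma A: in a popular matching every item of F is matched to a person whose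
-- first choice it is.
lemma pop_contra1 {M M' : A → Option B} (hpop : IsPopular pref M) (hM' : IsMatching pref M')
    (a1 : A) (hi1 : rank pref a1 (M' a1) < rank pref a1 (M a1))
    (hw : ∀ x, ¬ rank pref x (M x) < rank pref x (M' x)) : False := by
  have h1 : ({a1} : Set A) ⊆ {a | rank pref a (M' a) < rank pref a (M a)} := by
    intro x hx; rw [Set.mem_singleton_iff] at hx; subst hx; exact hi1
  have h2 : {a | rank pref a (M a) < rank pref a (M' a)} = ∅ := by
    ext x; simp only [Set.mem_setOf_eq, Set.mem_empty_iff_false, iff_false]; exact hw x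
  have c1 : 1 ≤ {a | rank pref a (M' a) < rank pref a (M a)}.ncard := by
    calc 1 = ({a1} : Set A).ncard := (Set.ncard_singleton a1).symm
      _ ≤ _ := Set.ncard_le_ncard h1 (Set.toFinite _)
  have := hpop M' hM'
  rw [h2, Set.ncard_empty] at this
  omega

lemma Fcond_of_popular (hstrict : ∀ a, (pref a).Nodup) {M : A → Option B}
    (hM : IsMatching pref M) (hpop : IsPopular pref M) :
    ∀ b ∈ F pref, ∃ a, M a = some b ∧ f pref a = some b := by
  by_contra hc
  push_neg at hc
  obtain ⟨b, hbF, hnb⟩ := hc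
  obtain ⟨a1, ha1⟩ : ∃ a, f pref a = some b := by unfold F at hbF; simpa using hbF
  have hrank1 : 0 < rank pref a1 (M a1) := by
    rcases Nat.eq_zero_or_pos (rank pref a1 (M a1)) with h | h
    · exfalso
      have hMa1 : M a1 = f pref a1 := rank_eq_zero (M_valid hM a1) h
      exact hnb a1 (by rw [hMa1, ha1]) ha1
    · exact h
  by_cases hex : ∃ a2, M a2 = some b
  · obtain ⟨a2, ha2⟩ := hex
    have hfa2 : f pref a2 ≠ some b := hnb a2 ha2
    have h12 : a1 ≠ a2 := fun h => hfa2 (h ▸ ha1)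
    have hbpref : b ∈ pref a2 := hM.1 a2 b ha2
    obtain ⟨c, hc2⟩ : ∃ c, f pref a2 = some c := by
      cases hl : pref a2 with
      | nil => rw [hl] at hbpref; simp at hbpref
      | cons x t => exact ⟨x, by unfold f; rw [hl]; rfl⟩
    have hcb : c ≠ b := fun h => hfa2 (h ▸ hc2)
    have hMa1b : M a1 ≠ some b := by
      intro h
      have := hM.2 a1 a2 (by rw [h]; simp) (by rw [h, ha2])
      exact h12 this
    have h21 : a2 ≠ a1 := fun h => h12 h.symm
    set M' : A → Option B := fun x => if x = a1 then some b else if x = a2 then some c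
      else if M x = some c then none else M x with hM'def
    have hM'1 : M' a1 = some b := by simp [hM'def]
    have hM'2 : M' a2 = some c := by simp [hM'def, h21]
    have hM'o : ∀ x, x ≠ a1 → x ≠ a2 → M x ≠ some c → M' x = M x := by
      intro x hx1 hx2 hxc
      simp [hM'def, hx1, hx2, hxc]
    have hM'oc : ∀ x, x ≠ a1 → x ≠ a2 → M x = some c → M' x = none := by
      intro x hx1 hx2 hxc
      simp [hM'def, hx1, hx2, hxc]
    have hM'match : IsMatching pref M' := by
      constructor
      · intro x y hy
        by_cases hx1 : x = a1
        · rw [hx1, hM'1] at hy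
          cases hy
          rw [hx1]
          exact mem_of_f ha1
        · by_cases hx2 : x = a2
          · rw [hx2, hM'2] at hy
            cases hy
            rw [hx2]
            exact mem_of_f hc2
          · by_cases hxc : M x = some c
            · rw [hM'oc x hx1 hx2 hxc] at hy; cases hy
            · rw [hM'o x hx1 hx2 hxc] at hy; exact hM.1 x y hy
      · intro x y hne heq
        by_cases hx1 : x = a1
        · rw [hx1, hM'1] at heq
          by_cases hy2 : y = a2
          · exfalso; rw [hy2, hM'2] at heq; exact hcb (Option.some.inj heq.symm)
          · by_cases hy1 : y = a1
            · rw [hx1, hy1]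
            · by_cases hyc : M y = some c
              · rw [hM'oc y hy1 hy2 hyc] at heq; cases heq
              · rw [hM'o y hy1 hy2 hyc] at heq
                exfalso
                exact hy2 (hM.2 y a2 (by rw [← heq]; simp) (by rw [← heq, ha2]))
        · by_cases hx2 : x = a2
          · rw [hx2, hM'2] at heq
            by_cases hy1 : y = a1
            · exfalso; rw [hy1, hM'1] at heq; exact hcb (Option.some.inj heq)
            · by_cases hy2 : y = a2
              · rw [hx2, hy2]
              · by_cases hyc : M y = some c
                · rw [hM'oc y hy1 hy2 hyc] at heq; cases heq
                · rw [hM'o y hy1 hy2 hyc] at heq; exact absurd heq.symm hyc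
          · by_cases hxc : M x = some c
            · exfalso; rw [hM'oc x hx1 hx2 hxc] at hne; exact hne rfl
            · rw [hM'o x hx1 hx2 hxc] at hne heq
              by_cases hy1 : y = a1
              · exfalso
                rw [hy1, hM'1] at heq
                exact hx2 (hM.2 x a2 (by rw [heq]; simp) (by rw [heq, ha2]))
              · by_cases hy2 : y = a2
                · exfalso; rw [hy2, hM'2] at heq; exact hxc heq
                · by_cases hyc : M y = some c
                  · exfalso; rw [hM'oc y hy1 hy2 hyc] at heq; exact hne heq
                  · rw [hM'o y hy1 hy2 hyc] at heq; exact hM.2 x y hne heq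
    have hi1 : rank pref a1 (M' a1) < rank pref a1 (M a1) := by
      rw [hM'1, rank_f_eq_zero ha1]; exact hrank1
    have hi2 : rank pref a2 (M' a2) < rank pref a2 (M a2) := by
      rw [hM'2, rank_f_eq_zero hc2, ha2, rank_some]
      rcases Nat.eq_zero_or_pos ((pref a2).idxOf b) with h | h
      · exfalso
        have : (some b : Option B) = f pref a2 := rank_eq_zero (fun y hy => by cases hy; exact hbpref) h
        exact hfa2 this.symm
      · exact h
    apply pop_contra hpop hM'match a1 a2 h12 hi1 hi2
    by_cases h3 : ∃ a3, M a3 = some c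
    · obtain ⟨a3, ha3⟩ := h3
      refine ⟨a3, fun x hx => ?_⟩
      by_cases hx1 : x = a1
      · exfalso; rw [hx1, hM'1, rank_f_eq_zero ha1] at hx; omega
      · by_cases hx2 : x = a2
        · exfalso
          rw [hx2, hM'2, rank_f_eq_zero hc2] at hx; omega
        · by_cases hxc : M x = some c
          · exact hM.2 x a3 (by rw [hxc]; simp) (by rw [hxc, ha3])
          · exfalso; rw [hM'o x hx1 hx2 hxc] at hx; omega
    · refine ⟨a1, fun x hx => ?_⟩
      exfalso
      by_cases hx1 : x = a1
      · rw [hx1, hM'1, rank_f_eq_zero ha1] at hx; omega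
      · by_cases hx2 : x = a2
        · rw [hx2, hM'2, rank_f_eq_zero hc2] at hx; omega
        · by_cases hxc : M x = some c
          · exact h3 ⟨x, hxc⟩
          · rw [hM'o x hx1 hx2 hxc] at hx; omega
  · -- b completely unmatched: promote a1
    push_neg at hex
    set M' := Function.update M a1 (some b) with hM'def
    have hupd : ∀ x, x ≠ a1 → M' x = M x := fun x hx => Function.update_of_ne hx _ _
    have hupd1 : M' a1 = some b := Function.update_self _ _ _
    have hM'match : IsMatching pref M' := by
      constructor
      · intro x y hy
        by_cases hx : x = a1
        · rw [hx, hupd1] at hy; cases hy; exact mem_of_f (by rw [← hx] at ha1; rw [hx]; exact (hx ▸ ha1))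
        · rw [hupd x hx] at hy; exact hM.1 x y hy
      · intro x y hne heq
        by_cases hx : x = a1
        · by_cases hy : y = a1
          · rw [hx, hy]
          · rw [hx, hupd1, hupd y hy] at heq; exact absurd heq.symm (hex y)
        · by_cases hy : y = a1
          · rw [hupd x hx, hy, hupd1] at heq; exact absurd heq (hex x)
          · rw [hupd x hx, hupd y hy] at heq
            exact hM.2 x y (by rw [← hupd x hx]; exact hne) heq
    apply pop_contra1 hpop hM'match a1
    · rw [hupd1, rank_f_eq_zero ha1]; exact hrank1
    · intro x hx
      by_cases h : x = a1
      · rw [h, hupd1, rank_f_eq_zero ha1] at hx; omega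
      · rw [hupd x h] at hx; omega

-- no person is matched worse than s(a)
lemma not_worse_than_s (hstrict : ∀ a, (pref a).Nodup) {M : A → Option B}
    (hM : IsMatching pref M) (hpop : IsPopular pref M) (a : A) :
    rank pref a (M a) ≤ rank pref a (s pref a) := by
  by_contra hgt
  push_neg at hgt
  obtain ⟨c, hsc⟩ : ∃ c, s pref a = some c := by
    cases hs : s pref a with
    | none =>
      exfalso
      rw [hs, rank_none] at hgt
      have := rank_le a (M a) (M_valid hM a)
      omega
    | some c => exact ⟨c, rfl⟩
  have hcpref : c ∈ pref a := s_mem hsc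
  have hcF : c ∉ F pref := s_not_mem_F hsc
  rw [hsc] at hgt
  have hMac : M a ≠ some c := by intro h; rw [h] at hgt; omega
  by_cases hex : ∃ a', M a' = some c
  · obtain ⟨a', ha'⟩ := hex
    have haa' : a ≠ a' := fun h => hMac (h ▸ ha')
    have hcpref' : c ∈ pref a' := hM.1 a' c ha'
    obtain ⟨b', hb'⟩ : ∃ b', f pref a' = some b' := by
      cases hl : pref a' with
      | nil => rw [hl] at hcpref'; simp at hcpref'
      | cons x t => exact ⟨x, by unfold f; rw [hl]; rfl⟩
    have hb'c : b' ≠ c := fun h => hcF (h ▸ f_mem_F hb')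
    obtain ⟨a'', ha''M, ha''f⟩ := Fcond_of_popular hstrict hM hpop b' (f_mem_F hb')
    have h2 : a' ≠ a'' := by
      intro h
      rw [← h, ha'] at ha''M
      exact hb'c (Option.some.inj ha''M.symm)
    have h3 : a ≠ a'' := by
      intro h
      rw [← h] at ha''M ha''f
      rw [ha''M, rank_f_eq_zero ha''f] at hgt
      omega
    have n1 : a' ≠ a := Ne.symm haa'
    have n2 : a'' ≠ a := Ne.symm h3
    have n3 : a'' ≠ a' := Ne.symm h2
    set M' : A → Option B := fun x => if x = a then some c else if x = a' then some b'
      else if x = a'' then none else M x with hM'def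
    have hM'a : M' a = some c := by simp [hM'def]
    have hM'a' : M' a' = some b' := by simp [hM'def, n1]
    have hM'a'' : M' a'' = none := by simp [hM'def, n2, n3]
    have hM'o : ∀ x, x ≠ a → x ≠ a' → x ≠ a'' → M' x = M x := by
      intro x hx1 hx2 hx3; simp [hM'def, hx1, hx2, hx3]
    have key : ∀ x y, M' x = some y →
        (y = c ∧ x = a) ∨ (y = b' ∧ x = a') ∨ (M x = some y ∧ x ≠ a ∧ x ≠ a' ∧ x ≠ a'') := by
      intro x y hxy
      by_cases hx1 : x = a
      · left; rw [hx1, hM'a] at hxy; exact ⟨(Option.some.inj hxy).symm, hx1⟩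
      · by_cases hx2 : x = a'
        · right; left; rw [hx2, hM'a'] at hxy; exact ⟨(Option.some.inj hxy).symm, hx2⟩
        · by_cases hx3 : x = a''
          · exfalso; rw [hx3, hM'a''] at hxy; cases hxy
          · right; right
            rw [hM'o x hx1 hx2 hx3] at hxy
            exact ⟨hxy, hx1, hx2, hx3⟩
    have hM'match : IsMatching pref M' := by
      constructor
      · intro x y hxy
        rcases key x y hxy with ⟨hy, hx⟩ | ⟨hy, hx⟩ | ⟨hxy', _⟩
        · rw [hy, hx]; exact hcpref
        · rw [hy, hx]; exact mem_of_f hb'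
        · exact hM.1 x y hxy'
      · intro x y hne heq
        cases hMx : M' x with
        | none => rw [hMx] at hne; exact absurd rfl hne
        | some v =>
          have hMy : M' y = some v := by rw [← heq]; exact hMx
          rcases key x v hMx with ⟨hv1, hx1⟩ | ⟨hv1, hx1⟩ | ⟨hxm, hxa, hxa', hxa''⟩ <;>
            rcases key y v hMy with ⟨hv2, hy1⟩ | ⟨hv2, hy1⟩ | ⟨hym, hya, hya', hya''⟩
          · rw [hx1, hy1]
          · exfalso; exact hb'c (by rw [← hv2, hv1])
          · exfalso
            apply hya'
            rw [hv1] at hym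
            exact hM.2 y a' (by rw [hym]; simp) (by rw [hym, ha'])
          · exfalso; exact hb'c (by rw [← hv1, hv2])
          · rw [hx1, hy1]
          · exfalso
            apply hya''
            rw [hv1] at hym
            exact hM.2 y a'' (by rw [hym]; simp) (by rw [hym, ha''M])
          · exfalso
            apply hxa'
            rw [hv2] at hxm
            exact hM.2 x a' (by rw [hxm]; simp) (by rw [hxm, ha'])
          · exfalso
            apply hxa''
            rw [hv2] at hxm
            exact hM.2 x a'' (by rw [hxm]; simp) (by rw [hxm, ha''M])
          · exact hM.2 x y (by rw [hxm]; simp) (by rw [hxm, hym])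
    have hi1 : rank pref a (M' a) < rank pref a (M a) := by rw [hM'a]; exact hgt
    have hi2 : rank pref a' (M' a') < rank pref a' (M a') := by
      rw [hM'a', rank_f_eq_zero hb', ha', rank_some]
      rcases Nat.eq_zero_or_pos ((pref a').idxOf c) with h | h
      · exfalso
        have : (some c : Option B) = f pref a' := rank_eq_zero (fun y hy => by cases hy; exact hcpref') h
        rw [hb'] at this
        exact hb'c (Option.some.inj this).symm
      · exact h
    apply pop_contra hpop hM'match a a' haa' hi1 hi2
    refine ⟨a'', fun x hx => ?_⟩
    by_cases hx1 : x = a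
    · exfalso; rw [hx1, hM'a] at hx; omega
    · by_cases hx2 : x = a'
      · exfalso; rw [hx2, hM'a', rank_f_eq_zero hb'] at hx; omega
      · by_cases hx3 : x = a''
        · exact hx3
        · exfalso; rw [hM'o x hx1 hx2 hx3] at hx; omega
  · push_neg at hex
    set M' := Function.update M a (some c) with hM'def
    have hupd : ∀ x, x ≠ a → M' x = M x := fun x hx => Function.update_of_ne hx _ _
    have hupd1 : M' a = some c := Function.update_self _ _ _
    have hM'match : IsMatching pref M' := by
      constructor
      · intro x y hy
        by_cases hx : x = a
        · rw [hx, hupd1] at hy; cases hy; rw [hx]; exact hcpref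
        · rw [hupd x hx] at hy; exact hM.1 x y hy
      · intro x y hne heq
        by_cases hx : x = a
        · by_cases hy : y = a
          · rw [hx, hy]
          · rw [hx, hupd1, hupd y hy] at heq; exact absurd heq.symm (hex y)
        · by_cases hy : y = a
          · rw [hupd x hx, hy, hupd1] at heq; exact absurd heq (hex x)
          · rw [hupd x hx, hupd y hy] at heq
            exact hM.2 x y (by rw [← hupd x hx]; exact hne) heq
    apply pop_contra1 hpop hM'match a
    · rw [hupd1]; exact hgt
    · intro x hx
      by_cases h : x = a
      · rw [h, hupd1] at hx; omega
      · rw [hupd x h] at hx; omega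

lemma APerfect_of_popular (hstrict : ∀ a, (pref a).Nodup) {M : A → Option B}
    (hM : IsMatching pref M) (hpop : IsPopular pref M) : IsAPerfect pref M := by
  intro a
  rcases lt_trichotomy (rank pref a (M a)) (rank pref a (s pref a)) with h | h | h
  · left
    cases hMa : M a with
    | none =>
      exfalso
      rw [hMa, rank_none] at h
      have := rank_le a (s pref a) (s_valid a)
      omega
    | some b =>
      have hb : b ∈ pref a := hM.1 a b hMa
      have hbF : b ∈ F pref := mem_F_of_rank_lt_s hb (by rw [← hMa]; exact h)
      obtain ⟨a', h1, h2⟩ := Fcond_of_popular hstrict hM hpop b hbF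
      have hee : a' = a := hM.2 a' a (by rw [h1]; simp) (by rw [h1, hMa])
      rw [← hee, h2]
  · right
    exact rank_inj hstrict a _ _ (M_valid hM a) (s_valid a) h
  · exact absurd h (not_lt.mpr (not_worse_than_s hstrict hM hpop a))


/-- In an instance with strict (possibly incomplete) preference lists
augmented with last resort items, a popular matching exists if and only if
an `A`-perfect matching exists. -/
theorem stmt_18 (pref : A → List B) (hstrict : ∀ a, (pref a).Nodup) :
    (∃ M, IsMatching pref M ∧ IsPopular pref M) ↔
      (∃ M, IsMatching pref M ∧ IsAPerfect pref M) := by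
  constructor
  · rintro ⟨M, hM, hpop⟩
    exact ⟨M, hM, APerfect_of_popular hstrict hM hpop⟩
  · rintro ⟨M, hM, hAP⟩
    exact popular_of_APerfect hstrict hM hAP


end Stmt18
end
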